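/- For every ε > 0 there exists δ > 0 such that for every A with 0 < A ≤ δ and every function q satisfying the hypotheses with q(0) = A, one has ∫_{-∞}^{∞} q'(s)² ds ≤ ε. -/

import Mathlib

open MeasureTheory Filter Real

open Set Topology

theorem stmt_16 (a μ : ℝ) (ha : 0 < a) (hμ : 1 / 3 < μ) :
    ∀ ε : ℝ, 0 < ε → ∃ δ : ℝ, 0 < δ ∧
      ∀ A : ℝ, 0 < A → A ≤ δ → ∀ q : ℝ → ℝ,
        (ContDiff ℝ 2 q ∧
        (∀ s : ℝ, deriv (deriv q) s * q s + a * s * deriv q s * q s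
          + μ * q s + (1 / 3) * s * deriv q s = 0) ∧
        q 0 = A ∧ deriv q 0 = 0 ∧
        (∀ s : ℝ, 0 < q s) ∧
        (∀ s : ℝ, q (-s) = q s) ∧
        StrictAntiOn q (Set.Ioi 0) ∧
        Tendsto q atTop (nhds 0) ∧
        Tendsto (deriv q) atTop (nhds 0) ∧
        Integrable q ∧
        Integrable (fun s : ℝ => q s ^ 2) ∧
        Integrable (fun s : ℝ => deriv q s ^ 2)) →
        (∫ s : ℝ, deriv q s ^ 2) ≤ ε := by
  intro ε hε
  have hμ0 : 0 < μ := lt_trans (by norm_num) hμ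
  set c : ℝ := (3 * ε / (4 * μ ^ 2)) ^ ((1:ℝ)/3) with hcdef
  have hx : 0 < 3 * ε / (4 * μ ^ 2) := by positivity
  have hc : 0 < c := Real.rpow_pos_of_pos hx _
  have hc3 : c ^ 3 = 3 * ε / (4 * μ ^ 2) := by
    rw [hcdef, ← Real.rpow_natCast _ 3, ← Real.rpow_mul hx.le]
    norm_num
  clear_value c
  refine ⟨Real.sqrt (ε * c / (12 * μ)), Real.sqrt_pos.mpr (by positivity), ?_⟩
  rintro A hA hAδ q ⟨hq2, hode, hq0, hq'0, hqpos, heven, hanti, -, -, -, -, hint⟩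
  have hA2 : A ^ 2 ≤ ε * c / (12 * μ) := by
    have h := Real.sq_sqrt (show (0:ℝ) ≤ ε * c / (12*μ) by positivity)
    nlinarith [Real.sqrt_nonneg (ε * c / (12 * μ))]
  -- smoothness facts
  rw [show (2 : WithTop ℕ∞) = 1 + 1 from rfl, contDiff_succ_iff_deriv] at hq2
  obtain ⟨hd1, -, hq1⟩ := hq2
  rw [contDiff_one_iff_deriv] at hq1
  obtain ⟨hd2, hc2⟩ := hq1
  -- q' is odd
  have hodd : ∀ s, deriv q (-s) = - deriv q s := by
    intro s
    have h1 : deriv (fun x => q (-x)) s = - deriv q (-s) := deriv_comp_neg q s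
    have h2 : (fun x : ℝ => q (-x)) = q := funext heven
    rw [h2] at h1
    linarith
  -- q' ≤ 0 on [0,∞)
  have hq'le : ∀ s : ℝ, 0 ≤ s → deriv q s ≤ 0 := by
    intro s hs
    rcases eq_or_lt_of_le hs with h | h
    · rw [← h, hq'0]
    · have hder : HasDerivAt q (deriv q s) s := (hd1 s).hasDerivAt
      have hmono : 𝓝[>] s ≤ 𝓝[≠] s :=
        nhdsWithin_mono _ (fun t ht => ne_of_gt ht)
      have hT : Tendsto (slope q s) (𝓝[>] s) (𝓝 (deriv q s)) :=
        (hasDerivAt_iff_tendsto_slope.mp hder).mono_left hmono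
      refine le_of_tendsto hT ?_
      filter_upwards [self_mem_nhdsWithin] with t ht
      have hqt : q t < q s := hanti h (h.trans ht) ht
      rw [slope_def_field]
      apply div_nonpos_of_nonpos_of_nonneg <;> simp at ht <;> linarith
  -- q'' ≥ -μ on [0,∞)
  have hq'' : ∀ s : ℝ, 0 ≤ s → -μ ≤ deriv (deriv q) s := by
    intro s hs
    have h := hode s
    have hqs := hqpos s
    have h1 : deriv q s ≤ 0 := hq'le s hs
    nlinarith [mul_nonneg (mul_nonneg (mul_nonneg ha.le hs) (neg_nonneg.2 h1)) hqs.le,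
      mul_nonneg hs (neg_nonneg.2 h1)]
  -- q' ≥ -μ s on [0,∞)
  have hq'ge : ∀ s : ℝ, 0 ≤ s → -(μ * s) ≤ deriv q s := by
    have hg : MonotoneOn (fun t => deriv q t + μ * t) (Ici 0) := by
      apply monotoneOn_of_deriv_nonneg (convex_Ici 0)
      · exact (hd2.continuous.add (continuous_const.mul continuous_id)).continuousOn
      · exact (hd2.add ((differentiable_id.const_mul μ))).differentiableOn
      · intro x hx
        rw [interior_Ici] at hx
        have hdx : HasDerivAt (fun t : ℝ => deriv q t + μ * t) (deriv (deriv q) x + μ * 1) x :=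
          ((hd2 x).hasDerivAt).add ((hasDerivAt_id x).const_mul μ)
        rw [hdx.deriv, mul_one]
        linarith [hq'' x (le_of_lt hx)]
    intro s hs
    have := hg (self_mem_Ici) hs hs
    simp only [hq'0, mul_zero, add_zero, zero_add] at this
    linarith
  -- the energy function
  set F : ℝ → ℝ := fun s => deriv q s ^ 2 * q s / 2 + μ * q s ^ 2 / 2 with hFdef
  have hFd' : ∀ s, HasDerivAt F
      (deriv q s ^ 3 / 2 - a * s * deriv q s ^ 2 * q s - 1/3 * s * deriv q s ^ 2) s := by
    intro s
    have h1 : HasDerivAt q (deriv q s) s := (hd1 s).hasDerivAt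
    have h2 : HasDerivAt (deriv q) (deriv (deriv q) s) s := (hd2 s).hasDerivAt
    have h3 := (((h2.pow 2).mul h1).div_const 2).add (((h1.pow 2).const_mul μ).div_const 2)
    refine h3.congr_deriv (Eq.symm ?_)
    have hodeq := hode s
    push_cast [Pi.pow_apply]
    linear_combination (- deriv q s : ℝ) * hodeq
  have hFcont : Continuous (fun s => deriv q s ^ 3 / 2 - a * s * deriv q s ^ 2 * q s
      - 1/3 * s * deriv q s ^ 2) := by
    have hqc : Continuous q := hd1.continuous
    have hq'c : Continuous (deriv q) := hd2.continuous
    fun_prop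
  have hF0 : F 0 = μ * A ^ 2 / 2 := by
    simp [hFdef, hq'0, hq0]
  have hFnonneg : ∀ s, 0 ≤ F s := by
    intro s
    have := hqpos s
    have := sq_nonneg (deriv q s)
    positivity
  clear_value F
  -- weighted integral bound
  have key : ∀ T : ℝ, 0 ≤ T →
      ∫ s in (0:ℝ)..T, s * deriv q s ^ 2 ≤ 3 * μ * A ^ 2 / 2 := by
    intro T hT
    have hftc : ∫ s in (0:ℝ)..T, (deriv q s ^ 3 / 2 - a * s * deriv q s ^ 2 * q s
        - 1/3 * s * deriv q s ^ 2) = F T - F 0 :=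
      intervalIntegral.integral_eq_sub_of_hasDerivAt (fun x _ => hFd' x)
        (hFcont.intervalIntegrable 0 T)
    have hq'c : Continuous (deriv q) := hd2.continuous
    have hmono : (∫ s in (0:ℝ)..T, (deriv q s ^ 3 / 2 - a * s * deriv q s ^ 2 * q s
          - 1/3 * s * deriv q s ^ 2)) ≤
        -(1/3) * ∫ s in (0:ℝ)..T, s * deriv q s ^ 2 := by
      rw [← intervalIntegral.integral_const_mul]
      apply intervalIntegral.integral_mono_on hT
      · exact hFcont.intervalIntegrable 0 T
      · exact Continuous.intervalIntegrable (by fun_prop) 0 T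
      · intro x hx
        have h1 : deriv q x ≤ 0 := hq'le x hx.1
        have h2 := (hqpos x).le
        have h3 : 0 ≤ a * x * deriv q x ^ 2 * q x :=
          mul_nonneg (mul_nonneg (mul_nonneg ha.le hx.1) (sq_nonneg _)) h2
        nlinarith [mul_nonneg (neg_nonneg.2 h1) (sq_nonneg (deriv q x))]
    have hFT := hFnonneg T
    rw [hftc, hF0] at hmono
    linarith [hmono]
  have hq'c : Continuous (deriv q) := hd2.continuous
  -- tail bound
  have htail : ∫ s in Ioi c, deriv q s ^ 2 ≤ 3 * μ * A ^ 2 / (2 * c) := by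
    have hInt : IntegrableOn (fun s : ℝ => deriv q s ^ 2) (Ioi c) := hint.integrableOn
    have hten := MeasureTheory.intervalIntegral_tendsto_integral_Ioi c hInt tendsto_id
    refine le_of_tendsto hten ?_
    filter_upwards [eventually_ge_atTop c] with T hTc
    have hT0 : (0:ℝ) ≤ T := hc.le.trans hTc
    have h1 : (∫ s in c..T, deriv q s ^ 2) ≤ (1/c) * ∫ s in c..T, s * deriv q s ^ 2 := by
      rw [← intervalIntegral.integral_const_mul]
      apply intervalIntegral.integral_mono_on hTc
      · exact Continuous.intervalIntegrable (by fun_prop) c T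
      · exact Continuous.intervalIntegrable (by fun_prop) c T
      · intro x hx
        have hxc : c ≤ x := hx.1
        have h2 := sq_nonneg (deriv q x)
        rw [div_mul_eq_mul_div, le_div_iff₀ hc]
        nlinarith
    have h2 : (∫ s in c..T, s * deriv q s ^ 2) ≤ ∫ s in (0:ℝ)..T, s * deriv q s ^ 2 := by
      rw [← intervalIntegral.integral_add_adjacent_intervals
        (Continuous.intervalIntegrable (by fun_prop) 0 c)
        (Continuous.intervalIntegrable (by fun_prop) c T)]
      have h3 : 0 ≤ ∫ s in (0:ℝ)..c, s * deriv q s ^ 2 :=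
        intervalIntegral.integral_nonneg hc.le
          (fun x hx => mul_nonneg hx.1 (sq_nonneg _))
      linarith
    have h4 := key T hT0
    simp only [id]
    have h5 : (1/c) * (∫ s in c..T, s * deriv q s ^ 2) ≤ (1/c) * (3 * μ * A ^ 2 / 2) :=
      mul_le_mul_of_nonneg_left (h2.trans h4) (by positivity)
    have h6 : (1/c) * (3 * μ * A ^ 2 / 2) = 3 * μ * A ^ 2 / (2 * c) := by
      field_simp
    linarith
  -- near-zero bound
  have hnear : (∫ s in (0:ℝ)..c, deriv q s ^ 2) ≤ μ ^ 2 * c ^ 3 / 3 := by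
    have h1 : (∫ s in (0:ℝ)..c, deriv q s ^ 2) ≤ ∫ s in (0:ℝ)..c, μ ^ 2 * s ^ 2 := by
      apply intervalIntegral.integral_mono_on hc.le
      · exact Continuous.intervalIntegrable (by fun_prop) 0 c
      · exact Continuous.intervalIntegrable (by fun_prop) 0 c
      · intro x hx
        have h2 := hq'le x hx.1
        have h3 := hq'ge x hx.1
        nlinarith [mul_nonneg hμ0.le hx.1]
    have h2 : (∫ s in (0:ℝ)..c, μ ^ 2 * s ^ 2) = μ ^ 2 * c ^ 3 / 3 := by
      rw [intervalIntegral.integral_const_mul, integral_pow]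
      norm_num
      ring
    linarith
  -- splitting at c
  have hsplit : ∫ s in Ioi (0:ℝ), deriv q s ^ 2
      = (∫ s in (0:ℝ)..c, deriv q s ^ 2) + ∫ s in Ioi c, deriv q s ^ 2 := by
    rw [intervalIntegral.integral_of_le hc.le,
      ← MeasureTheory.setIntegral_union (Ioc_disjoint_Ioi le_rfl) measurableSet_Ioi
        hint.integrableOn hint.integrableOn,
      Set.Ioc_union_Ioi_eq_Ioi hc.le]
  -- evenness
  have hwhole : (∫ s : ℝ, deriv q s ^ 2) = 2 * ∫ s in Ioi (0:ℝ), deriv q s ^ 2 := by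
    have h1 := intervalIntegral.integral_Iic_add_Ioi (b := (0:ℝ)) (f := fun s => deriv q s ^ 2)
      hint.integrableOn hint.integrableOn
    have h2 : (∫ s in Iic (0:ℝ), deriv q s ^ 2) = ∫ s in Ioi (0:ℝ), deriv q s ^ 2 := by
      have h3 := integral_comp_neg_Ioi (0:ℝ) (fun s => deriv q s ^ 2)
      simp only [neg_zero] at h3
      rw [← h3]
      congr 1
      ext s
      rw [hodd]
      ring
    linarith
  -- conclusion
  rw [hwhole, hsplit]
  have e1 : μ ^ 2 * c ^ 3 / 3 = ε / 4 := by
    rw [hc3]; field_simp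
  have e2 : 3 * μ * A ^ 2 / (2 * c) ≤ ε / 8 := by
    rw [div_le_div_iff₀ (by positivity) (by norm_num)]
    have h7 : A ^ 2 * (12 * μ) ≤ ε * c := by
      rw [le_div_iff₀ (by positivity)] at hA2
      exact hA2
    linarith [h7]
  clear * - hnear htail e1 e2 hε
  linarith
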